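/- Let G be an undirected graph with positive edge weights and a vertex coloring, with at least two colors. With OPT_T and OPT_ACSP(j) as defined, and a constant c ≥ 1, if A : V → ℝ is any function satisfying OPT_ACSP(j) ≤ A(j) ≤ c · OPT_ACSP(j) for every vertex j, then OPT_T ≤ min over j of A(j) < 2·c · OPT_T. -/

import Mathlib

open SimpleGraph

/-- The total weight of a walk: sum of edge weights with multiplicity. -/
def walkWeight {V : Type*} {G : SimpleGraph V} (w : V → V → ℝ) {u v : V}
    (p : G.Walk u v) : ℝ :=
  (p.darts.map (fun d => w d.fst d.snd)).sum

namespace ACSPAux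

open SimpleGraph Walk

variable {V : Type*} {G : SimpleGraph V}

lemma walkWeight_nil {w : V → V → ℝ} {u : V} :
    walkWeight w (Walk.nil : G.Walk u u) = 0 := rfl

lemma walkWeight_cons {w : V → V → ℝ} {u v x : V} (h : G.Adj u v) (p : G.Walk v x) :
    walkWeight w (Walk.cons h p) = w u v + walkWeight w p := by
  simp [walkWeight]

lemma walkWeight_append {w : V → V → ℝ} {u v x : V} (p : G.Walk u v) (q : G.Walk v x) :
    walkWeight w (p.append q) = walkWeight w p + walkWeight w q := by
  simp [walkWeight, Walk.darts_append]

lemma walkWeight_reverse (w : V → V → ℝ) (hw : ∀ a b, w a b = w b a) {u v : V}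
    (p : G.Walk u v) : walkWeight w p.reverse = walkWeight w p := by
  induction p with
  | nil => simp [walkWeight]
  | cons h p ih =>
    rw [Walk.reverse_cons, walkWeight_append, ih, walkWeight_cons, walkWeight_cons,
      walkWeight_nil, hw]
    ring

lemma walkWeight_eq_sum_edges (w : V → V → ℝ) (hw : ∀ a b, w a b = w b a) {u v : V}
    (p : G.Walk u v) :
    walkWeight w p = (p.edges.map (Sym2.lift ⟨w, hw⟩)).sum := by
  induction p with
  | nil => rfl
  | cons h p ih =>
    rw [walkWeight_cons, Walk.edges_cons, List.map_cons, List.sum_cons, ih, Sym2.lift_mk]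

lemma lift_pos {w : V → V → ℝ} {hw : ∀ a b, w a b = w b a}
    (hpos : ∀ a b, G.Adj a b → 0 < w a b) {H : G.Subgraph} {e : Sym2 V}
    (he : e ∈ H.edgeSet) : 0 < Sym2.lift ⟨w, hw⟩ e := by
  induction e using Sym2.ind with
  | _ a b =>
    rw [Sym2.lift_mk]
    exact hpos a b (Subgraph.mem_edgeSet.mp he).adj_sub

/-- A simple graph with no edges is acyclic. -/
lemma isAcyclic_of_no_adj {G' : SimpleGraph V} (h : ∀ a b, ¬ G'.Adj a b) :
    G'.IsAcyclic := by
  intro v c hc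
  cases c with
  | nil => exact hc.not_of_nil
  | cons hadj p => exact h _ _ hadj

lemma coe_isAcyclic_of_spanningCoe {H : G.Subgraph}
    (h : H.spanningCoe.IsAcyclic) : H.coe.IsAcyclic := by
  intro v c hc
  have hinj : Function.Injective (Subtype.val : H.verts → V) := Subtype.val_injective
  let f : H.coe →g H.spanningCoe := ⟨Subtype.val, fun {a b} hab => hab⟩
  exact h (c.map f) (hc.map (f := f) hinj)

/-- Adding a pendant edge to an acyclic subgraph keeps it acyclic. -/
lemma sAcyclic_sup_pendant {H : G.Subgraph} {a b : V} (hab : G.Adj a b)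
    (hb : b ∉ H.verts) (hH : H.spanningCoe.IsAcyclic) :
    (H ⊔ G.subgraphOfAdj hab).spanningCoe.IsAcyclic := by
  classical
  intro v c hc
  -- only neighbor of b in the new graph is a
  have hnbr : ∀ y : V, (H ⊔ G.subgraphOfAdj hab).Adj b y → y = a := by
    intro y hy
    rcases Subgraph.sup_adj.mp hy with h1 | h1
    · exact absurd (H.edge_vert h1) hb
    · simp only [subgraphOfAdj_adj] at h1
      rw [Sym2.eq_iff] at h1
      rcases h1 with ⟨h1, h2⟩ | ⟨h1, h2⟩
      · exact absurd h1 hab.ne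
      · exact h1.symm
  by_cases he : s(a, b) ∈ c.edges
  · -- the cycle visits b
    have hbsup : b ∈ c.support := by
      have : s(b, a) ∈ c.edges := by rwa [Sym2.eq_swap]
      exact c.fst_mem_support_of_mem_edges this
    have hc' := hc.rotate hbsup
    set c' := c.rotate _ hbsup with hc'def
    cases hcc : c' with
    | nil => rw [hcc] at hc'; exact hc'.not_of_nil
    | @cons _ x _ hadj q =>
      rw [hcc] at hc'
      have hxa : x = a := hnbr x hadj
      -- q : Walk x b; find last dart of q via q.reverse
      have hqnil : ¬ q.reverse.Nil := Walk.not_nil_of_ne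
        (fun hbx => hab.ne (by rw [hxa] at hbx; exact hbx.symm))
      obtain ⟨y, hadj2, r, hr⟩ := Walk.not_nil_iff.mp hqnil
      have hya : y = a := hnbr y hadj2
      have hmem : s(b, a) ∈ q.edges := by
        have h5 : s(b, y) ∈ q.reverse.edges := by
          rw [hr, Walk.edges_cons]; exact List.mem_cons_self
        rw [hya] at h5
        rwa [Walk.edges_reverse, List.mem_reverse] at h5
      have hnodup := hc'.edges_nodup
      rw [Walk.edges_cons] at hnodup
      have hbx : s(b, x) = s(b, a) := by rw [hxa]
      rw [hbx] at hnodup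
      exact (List.nodup_cons.mp hnodup).1 hmem
  · -- the cycle stays inside H
    have hsub : ∀ e ∈ c.edges, e ∈ H.spanningCoe.edgeSet := by
      intro e hec
      have := Walk.edges_subset_edgeSet c hec
      induction e using Sym2.ind with
      | _ p q =>
        rw [SimpleGraph.mem_edgeSet, Subgraph.spanningCoe_adj] at this ⊢
        rcases Subgraph.sup_adj.mp this with h1 | h1
        · exact h1
        · exfalso
          simp only [subgraphOfAdj_adj] at h1
          rw [← h1] at hec
          exact he hec
    exact hH (c.transfer H.spanningCoe hsub) (hc.transfer hsub)

/-- From any walk we can extract a tree subgraph spanning its support with at most its weight. -/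
lemma exists_tree_of_walk [Fintype V] (w : V → V → ℝ) (hw : ∀ a b, w a b = w b a)
    (hpos : ∀ a b, G.Adj a b → 0 < w a b) {j t : V} (p : G.Walk j t) :
    ∃ T : G.Subgraph, T.Connected ∧ T.spanningCoe.IsAcyclic ∧
      T.verts = {v | v ∈ p.support} ∧
      ∑ e ∈ T.edgeSet.toFinite.toFinset, Sym2.lift ⟨w, hw⟩ e ≤ walkWeight w p := by
  classical
  induction p with
  | @nil u =>
    refine ⟨G.singletonSubgraph u, Subgraph.singletonSubgraph_connected, ?_, ?_, ?_⟩
    · apply isAcyclic_of_no_adj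
      intro a b hab
      simpa using hab
    · ext y
      simp
    · have hempty : (G.singletonSubgraph u).edgeSet.toFinite.toFinset = (∅ : Finset (Sym2 V)) := by
        rw [Set.Finite.toFinset_eq_empty]
        exact edgeSet_singletonSubgraph u
      rw [walkWeight_nil, hempty, Finset.sum_empty]
  | @cons u v x h q ih =>
    obtain ⟨T, Tconn, Tacyc, Tverts, Twt⟩ := ih
    by_cases hu : u ∈ q.support
    · refine ⟨T, Tconn, Tacyc, ?_, ?_⟩
      · rw [Tverts]
        ext y
        simp only [Set.mem_setOf_eq, Walk.support_cons, List.mem_cons]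
        constructor
        · exact Or.inr
        · rintro (rfl | hy)
          · exact hu
          · exact hy
      · rw [walkWeight_cons]
        have := (hpos u v h).le
        linarith
    · -- u is a new pendant vertex
      have huT : u ∉ T.verts := by rw [Tverts]; exact hu
      have hvT : v ∈ T.verts := by rw [Tverts]; exact q.start_mem_support
      refine ⟨T ⊔ G.subgraphOfAdj h.symm, ?_, ?_, ?_, ?_⟩
      · refine Subgraph.connected_sup Tconn.preconnected (Subgraph.subgraphOfAdj_connected h.symm).preconnected ?_
        refine ⟨v, ?_⟩
        rw [Subgraph.verts_inf]
        exact ⟨hvT, by simp⟩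
      · exact sAcyclic_sup_pendant h.symm huT Tacyc
      · rw [Subgraph.verts_sup, Tverts]
        ext y
        simp only [Set.mem_union, Set.mem_setOf_eq, Walk.support_cons, List.mem_cons,
          subgraphOfAdj_verts, Set.mem_insert_iff, Set.mem_singleton_iff]
        constructor
        · rintro (hy | rfl | rfl)
          · exact Or.inr hy
          · exact Or.inr q.start_mem_support
          · exact Or.inl rfl
        · rintro (rfl | hy)
          · exact Or.inr (Or.inr rfl)
          · exact Or.inl hy
      · have hnot : s(v, u) ∉ T.edgeSet := by
          intro hmem
          exact huT (T.edge_vert (Subgraph.mem_edgeSet.mp hmem).symm)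
        have hfin : (T ⊔ G.subgraphOfAdj h.symm).edgeSet.toFinite.toFinset
            = insert s(v, u) T.edgeSet.toFinite.toFinset := by
          ext e
          simp only [Set.Finite.mem_toFinset, Finset.mem_insert, Subgraph.edgeSet_sup,
            Set.mem_union, edgeSet_subgraphOfAdj, Set.mem_singleton_iff]
          tauto
        have hnot' : s(v, u) ∉ T.edgeSet.toFinite.toFinset := by
          rw [Set.Finite.mem_toFinset]; exact hnot
        have hlift : Sym2.lift ⟨w, hw⟩ s(v, u) = w v u := Sym2.lift_mk _ _ _
        rw [hfin, Finset.sum_insert hnot', walkWeight_cons, hlift, hw v u]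
        linarith

/-- Every connected subgraph admits a walk from any of its vertices covering all its
vertices with weight at most twice the total edge weight. -/
lemma exists_tour [Fintype V] (w : V → V → ℝ) (hw : ∀ a b, w a b = w b a)
    (hpos : ∀ a b, G.Adj a b → 0 < w a b) (H : G.Subgraph) (hconn : H.Connected)
    {u : V} (hu : u ∈ H.verts) :
    ∃ p : G.Walk u u, (∀ v ∈ H.verts, v ∈ p.support) ∧
      walkWeight w p ≤ 2 * ∑ e ∈ H.edgeSet.toFinite.toFinset, Sym2.lift ⟨w, hw⟩ e := by
  classical
  have key : ∀ n (p : G.Walk u u), (∀ e ∈ p.edges, e ∈ H.edgeSet) →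
      (∀ e, p.edges.count e ≤ 2) →
      (H.verts \ {v | v ∈ p.support}).toFinite.toFinset.card ≤ n →
      ∃ p' : G.Walk u u, (∀ v ∈ H.verts, v ∈ p'.support) ∧
        (∀ e ∈ p'.edges, e ∈ H.edgeSet) ∧ (∀ e, p'.edges.count e ≤ 2) := by
    intro n
    induction n with
    | zero =>
      intro p hE hcount hcard
      refine ⟨p, ?_, hE, hcount⟩
      intro v hv
      by_contra hvs
      have hmem : v ∈ (H.verts \ {v | v ∈ p.support}).toFinite.toFinset := by
        simp only [Set.Finite.mem_toFinset, Set.mem_diff, Set.mem_setOf_eq]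
        exact ⟨hv, hvs⟩
      have := Finset.card_pos.mpr ⟨v, hmem⟩
      omega
    | succ n ih =>
      intro p hE hcount hcard
      by_cases hall : ∀ v ∈ H.verts, v ∈ p.support
      · exact ⟨p, hall, hE, hcount⟩
      · push_neg at hall
        obtain ⟨x, hx, hxs⟩ := hall
        obtain ⟨q⟩ := hconn ⟨u, hu⟩ ⟨x, hx⟩
        obtain ⟨d, _, hdf, hds⟩ := q.exists_boundary_dart {v : H.verts | ↑v ∈ p.support}
          (by simpa using p.start_mem_support) (by simpa using hxs)
        have hHab : H.Adj (↑d.fst) (↑d.snd) := d.adj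
        set a : V := (↑d.fst : V) with hadef
        set b : V := (↑d.snd : V) with hbdef
        have ha : a ∈ p.support := hdf
        have hbs : b ∉ p.support := hds
        have hGab : G.Adj a b := hHab.adj_sub
        have hbH : b ∈ H.verts := H.edge_vert hHab.symm
        set t1 := p.takeUntil a ha with ht1
        set t2 := p.dropUntil a ha with ht2
        set p' : G.Walk u u := t1.append (Walk.cons hGab (Walk.cons hGab.symm t2)) with hp'
        have hpe : p.edges = t1.edges ++ t2.edges := by
          conv_lhs => rw [← p.take_spec ha]
          rw [Walk.edges_append]
        have hp'e : p'.edges = t1.edges ++ (s(a, b) :: s(b, a) :: t2.edges) := by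
          rw [hp', Walk.edges_append, Walk.edges_cons, Walk.edges_cons]
        have hsupp' : ∀ v, v ∈ p.support → v ∈ p'.support := by
          intro v hv
          rw [← p.take_spec ha, Walk.mem_support_append_iff] at hv
          rw [hp', Walk.mem_support_append_iff]
          rcases hv with h1 | h1
          · exact Or.inl h1
          · right
            rw [Walk.support_cons, Walk.support_cons]
            exact List.mem_cons_of_mem _ (List.mem_cons_of_mem _ h1)
        have hb' : b ∈ p'.support := by
          rw [hp', Walk.mem_support_append_iff]
          right
          rw [Walk.support_cons, Walk.support_cons]
          exact List.mem_cons_of_mem _ List.mem_cons_self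
        have hE' : ∀ e ∈ p'.edges, e ∈ H.edgeSet := by
          intro e he
          rw [hp'e, List.mem_append, List.mem_cons, List.mem_cons] at he
          rcases he with h1 | h1 | h1 | h1
          · exact hE e (by rw [hpe, List.mem_append]; exact Or.inl h1)
          · rw [h1]; exact Subgraph.mem_edgeSet.mpr hHab
          · rw [h1]; exact Subgraph.mem_edgeSet.mpr hHab.symm
          · exact hE e (by rw [hpe, List.mem_append]; exact Or.inr h1)
        have hnotin : s(a, b) ∉ p.edges := fun hmem => hbs (p.snd_mem_support_of_mem_edges hmem)
        have hswap : s(b, a) = s(a, b) := Sym2.eq_swap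
        have hcount' : ∀ e, p'.edges.count e ≤ 2 := by
          intro e
          have hpc := hcount e
          rw [hpe, List.count_append] at hpc
          by_cases heq : e = s(a, b)
          · subst heq
            have h0 : p.edges.count s(a, b) = 0 := List.count_eq_zero.mpr hnotin
            rw [hpe, List.count_append] at h0
            rw [hp'e, List.count_append, hswap]
            simp only [List.count_cons_self]
            omega
          · have hne2 : e ≠ s(b, a) := by rw [hswap]; exact heq
            rw [hp'e, List.count_append, List.count_cons_of_ne (Ne.symm heq), List.count_cons_of_ne (Ne.symm hne2)]
            omega
        have hbD : b ∈ (H.verts \ {v | v ∈ p.support}).toFinite.toFinset := by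
          simp only [Set.Finite.mem_toFinset, Set.mem_diff, Set.mem_setOf_eq]
          exact ⟨hbH, hbs⟩
        have hDsub : (H.verts \ {v | v ∈ p'.support}).toFinite.toFinset ⊆
            ((H.verts \ {v | v ∈ p.support}).toFinite.toFinset).erase b := by
          intro v hv
          simp only [Set.Finite.mem_toFinset, Set.mem_diff, Set.mem_setOf_eq] at hv
          rw [Finset.mem_erase]
          refine ⟨?_, ?_⟩
          · rintro rfl; exact hv.2 hb'
          · simp only [Set.Finite.mem_toFinset, Set.mem_diff, Set.mem_setOf_eq]
            exact ⟨hv.1, fun hs => hv.2 (hsupp' _ hs)⟩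
        have hcard' : (H.verts \ {v | v ∈ p'.support}).toFinite.toFinset.card ≤ n := by
          have h1 := Finset.card_le_card hDsub
          rw [Finset.card_erase_of_mem hbD] at h1
          omega
        exact ih p' hE' hcount' hcard'
  obtain ⟨p, hcov, hE, hcount⟩ := key _ Walk.nil (by simp) (by simp) le_rfl
  refine ⟨p, hcov, ?_⟩
  rw [walkWeight_eq_sum_edges w hw, Finset.sum_list_map_count]
  have hsub : p.edges.toFinset ⊆ H.edgeSet.toFinite.toFinset := by
    intro e he
    rw [Set.Finite.mem_toFinset]
    exact hE e (List.mem_toFinset.mp he)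
  calc ∑ e ∈ p.edges.toFinset, p.edges.count e • Sym2.lift ⟨w, hw⟩ e
      ≤ ∑ e ∈ p.edges.toFinset, 2 * Sym2.lift ⟨w, hw⟩ e := by
        apply Finset.sum_le_sum
        intro e he
        have hpos' : 0 < Sym2.lift ⟨w, hw⟩ e := lift_pos hpos (hE e (List.mem_toFinset.mp he))
        rw [nsmul_eq_mul]
        exact mul_le_mul_of_nonneg_right (by exact_mod_cast hcount e) hpos'.le
    _ ≤ ∑ e ∈ H.edgeSet.toFinite.toFinset, 2 * Sym2.lift ⟨w, hw⟩ e := by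
        apply Finset.sum_le_sum_of_subset_of_nonneg hsub
        intro e heH _
        have := lift_pos (hw := hw) hpos ((Set.Finite.mem_toFinset _).mp heH)
        linarith
    _ = 2 * ∑ e ∈ H.edgeSet.toFinite.toFinset, Sym2.lift ⟨w, hw⟩ e := by
        rw [Finset.mul_sum]

end ACSPAux

theorem stmt10 {V C : Type*} [Fintype V] [Nonempty V] {G : SimpleGraph V}
    (w : V → V → ℝ) (hw : ∀ a b, w a b = w b a)
    (hpos : ∀ a b, G.Adj a b → 0 < w a b) (κ : V → C)
    (htwo : ∃ u v : V, κ u ≠ κ v)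
    (optT : ℝ)
    (hT : IsLeast {x : ℝ | ∃ H : G.Subgraph, H.Connected ∧ H.coe.IsAcyclic ∧
        (∀ c ∈ Set.range κ, ∃ v ∈ H.verts, κ v = c) ∧
        x = ∑ e ∈ H.edgeSet.toFinite.toFinset, Sym2.lift ⟨w, hw⟩ e} optT)
    (optA : V → ℝ)
    (hA : ∀ j : V, IsLeast {x : ℝ | ∃ (t : V) (p : G.Walk j t),
        (∀ c ∈ Set.range κ, ∃ v ∈ p.support, κ v = c) ∧
        x = walkWeight w p} (optA j))
    (c : ℝ) (hc : 1 ≤ c) (A : V → ℝ)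
    (hAbounds : ∀ j : V, optA j ≤ A j ∧ A j ≤ c * optA j) :
    optT ≤ Finset.univ.inf' Finset.univ_nonempty A ∧
      Finset.univ.inf' Finset.univ_nonempty A < 2 * c * optT := by
  classical
  obtain ⟨Hopt, Hconn, Hacyc, Hcov, Heq⟩ := hT.1
  have h1 : ∀ j : V, optT ≤ optA j := by
    intro j
    obtain ⟨t, p, hcov, heq⟩ := (hA j).1
    obtain ⟨T, Tconn, Tacyc, Tverts, Twt⟩ := ACSPAux.exists_tree_of_walk w hw hpos p
    have hmem : (∑ e ∈ T.edgeSet.toFinite.toFinset, Sym2.lift ⟨w, hw⟩ e) ∈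
        {x : ℝ | ∃ H : G.Subgraph, H.Connected ∧ H.coe.IsAcyclic ∧
          (∀ c ∈ Set.range κ, ∃ v ∈ H.verts, κ v = c) ∧
          x = ∑ e ∈ H.edgeSet.toFinite.toFinset, Sym2.lift ⟨w, hw⟩ e} := by
      refine ⟨T, Tconn, ACSPAux.coe_isAcyclic_of_spanningCoe Tacyc, ?_, rfl⟩
      intro c hcr
      obtain ⟨v, hv, hvc⟩ := hcov c hcr
      exact ⟨v, by rw [Tverts]; exact hv, hvc⟩
    have h2 := hT.2 hmem
    rw [heq]
    linarith
  have hinf1 : optT ≤ Finset.univ.inf' Finset.univ_nonempty A := by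
    apply Finset.le_inf'
    intro j _
    exact le_trans (h1 j) (hAbounds j).1
  refine ⟨hinf1, ?_⟩
  obtain ⟨u₀, v₀, hne⟩ := htwo
  obtain ⟨x, hxv, hxc⟩ := Hcov (κ u₀) ⟨u₀, rfl⟩
  obtain ⟨y, hyv, hyc⟩ := Hcov (κ v₀) ⟨v₀, rfl⟩
  have hxy : y ≠ x := by
    intro h
    apply hne
    rw [← hxc, ← hyc, h]
  obtain ⟨p, hsupp, hwt⟩ := ACSPAux.exists_tour w hw hpos Hopt Hconn hxv
  rw [← Heq] at hwt
  cases p with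
  | nil =>
    exfalso
    have := hsupp y hyv
    rw [Walk.mem_support_nil_iff] at this
    exact hxy this
  | @cons _ z _ hadj q =>
    have hqw : walkWeight w q.reverse < 2 * optT := by
      rw [ACSPAux.walkWeight_reverse w hw]
      rw [ACSPAux.walkWeight_cons] at hwt
      have := hpos x z hadj
      linarith
    have hmem : walkWeight w q.reverse ∈ {x_1 : ℝ | ∃ (t : V) (p : G.Walk x t),
        (∀ c ∈ Set.range κ, ∃ v ∈ p.support, κ v = c) ∧ x_1 = walkWeight w p} := by
      refine ⟨z, q.reverse, ?_, rfl⟩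
      intro c hcr
      obtain ⟨v, hv, hvc⟩ := Hcov c hcr
      have hvs := hsupp v hv
      rw [Walk.support_cons] at hvs
      have hvq : v ∈ q.support := by
        rcases List.mem_cons.mp hvs with rfl | h
        · exact q.end_mem_support
        · exact h
      refine ⟨v, ?_, hvc⟩
      rw [Walk.support_reverse, List.mem_reverse]
      exact hvq
    have hoptAx := (hA x).2 hmem
    have hc0 : 0 < c := lt_of_lt_of_le one_pos hc
    calc Finset.univ.inf' Finset.univ_nonempty A ≤ A x := Finset.inf'_le _ (Finset.mem_univ x)
      _ ≤ c * optA x := (hAbounds x).2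
      _ ≤ c * walkWeight w q.reverse := mul_le_mul_of_nonneg_left hoptAx hc0.le
      _ < c * (2 * optT) := mul_lt_mul_of_pos_left hqw hc0
      _ = 2 * c * optT := by ring
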